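/- arXiv:1401.4316 — 2 statements merged into one kernel-verified Lean document; each statement's English description precedes it below -/
import Mathlib

section
/- Fix constants C > 0, ε₀ > 0, γ > 0 and 0 ≤ β < 1. Then there exists C' > 0 such that: for every differentiable function f : (0,ε₀) → [0,∞) satisfying |f'(ε)| ≤ C (f(ε) + 1) ε^{-β} and f(ε) ≤ C ε^{-γ} for all ε ∈ (0,ε₀), one has f(ε) ≤ C' for all ε ∈ (0,ε₀). -/
open Set

theorem bootstrap_differential_inequality (C ε₀ γ β : ℝ)
    (hC : 0 < C) (hε₀ : 0 < ε₀) (hγ : 0 < γ) (hβ0 : 0 ≤ β) (hβ1 : β < 1) :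
    ∃ C' > 0, ∀ f : ℝ → ℝ,
      (∀ ε ∈ Set.Ioo (0:ℝ) ε₀, 0 ≤ f ε) →
      (∀ ε ∈ Set.Ioo (0:ℝ) ε₀, DifferentiableAt ℝ f ε) →
      (∀ ε ∈ Set.Ioo (0:ℝ) ε₀, |deriv f ε| ≤ C * (f ε + 1) * ε ^ (-β)) →
      (∀ ε ∈ Set.Ioo (0:ℝ) ε₀, f ε ≤ C * ε ^ (-γ)) →
      ∀ ε ∈ Set.Ioo (0:ℝ) ε₀, f ε ≤ C' := by
  have h1β : (0:ℝ) < 1 - β := by linarith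
  set ε₁ : ℝ := ε₀ / 2 with hε₁def
  have hε₁ : ε₁ ∈ Set.Ioo (0:ℝ) ε₀ := ⟨by positivity, by linarith⟩
  set h : ℝ → ℝ := fun x => (C / (1 - β)) * x ^ (1 - β) with hdef
  have hhnonneg : ∀ x : ℝ, 0 ≤ x → 0 ≤ h x := by
    intro x hx
    have : (0:ℝ) ≤ x ^ (1 - β) := Real.rpow_nonneg hx _
    positivity
  have hhmono : ∀ x ∈ Set.Ioo (0:ℝ) ε₀, h x ≤ h ε₀ := by
    intro x hx
    have : x ^ (1 - β) ≤ ε₀ ^ (1 - β) :=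
      Real.rpow_le_rpow hx.1.le hx.2.le h1β.le
    have hc : 0 ≤ C / (1 - β) := by positivity
    exact mul_le_mul_of_nonneg_left this hc
  refine ⟨(C * ε₁ ^ (-γ) + 1) * Real.exp (h ε₀), by positivity, ?_⟩
  intro f hpos hdiff hder hbound
  -- derivative facts
  have key : ∀ ε ∈ Set.Ioo (0:ℝ) ε₀,
      HasDerivAt (fun x => Real.log (f x + 1)) (deriv f ε / (f ε + 1)) ε ∧
      |deriv f ε / (f ε + 1)| ≤ C * ε ^ (-β) ∧
      HasDerivAt h (C * ε ^ (-β)) ε := by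
    intro ε hε
    have hfε : (0:ℝ) < f ε + 1 := by have := hpos ε hε; linarith
    have hu : HasDerivAt (fun x => f x + 1) (deriv f ε) ε :=
      ((hdiff ε hε).hasDerivAt).add_const 1
    have hg : HasDerivAt (fun x => Real.log (f x + 1)) ((f ε + 1)⁻¹ * deriv f ε) ε :=
      by have := (Real.hasDerivAt_log hfε.ne').comp ε hu; exact this
    have habs : |deriv f ε / (f ε + 1)| ≤ C * ε ^ (-β) := by
      rw [abs_div, abs_of_pos hfε, div_le_iff₀ hfε]
      calc |deriv f ε| ≤ C * (f ε + 1) * ε ^ (-β) := hder ε hε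
        _ = C * ε ^ (-β) * (f ε + 1) := by ring
    have hh : HasDerivAt h (C * ε ^ (-β)) ε := by
      have := (Real.hasDerivAt_rpow_const (p := 1 - β) (Or.inl hε.1.ne')).const_mul
        (C / (1 - β))
      refine this.congr_deriv ?_
      rw [show (1 - β - 1) = -β by ring]
      field_simp
    refine ⟨?_, habs, hh⟩
    simpa [div_eq_inv_mul] using hg
  set g : ℝ → ℝ := fun x => Real.log (f x + 1) with hgdef
  have hint : interior (Set.Ioo (0:ℝ) ε₀) = Set.Ioo 0 ε₀ := interior_Ioo
  -- g + h monotone on Ioo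
  have hmono : MonotoneOn (fun x => g x + h x) (Set.Ioo 0 ε₀) := by
    apply monotoneOn_of_deriv_nonneg (convex_Ioo _ _)
    · intro x hx
      obtain ⟨hg, _, hh⟩ := key x hx
      exact (hg.add hh).continuousAt.continuousWithinAt
    · rw [hint]
      intro x hx
      obtain ⟨hg, _, hh⟩ := key x hx
      exact (hg.add hh).differentiableAt.differentiableWithinAt
    · rw [hint]
      intro x hx
      obtain ⟨hg, habs, hh⟩ := key x hx
      rw [HasDerivAt.deriv (f := fun x => g x + h x) (hg.add hh)]
      have := abs_le.1 habs
      linarith [this.1]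
  -- g - h antitone on Ioo
  have hanti : AntitoneOn (fun x => g x - h x) (Set.Ioo 0 ε₀) := by
    apply antitoneOn_of_deriv_nonpos (convex_Ioo _ _)
    · intro x hx
      obtain ⟨hg, _, hh⟩ := key x hx
      exact (hg.sub hh).continuousAt.continuousWithinAt
    · rw [hint]
      intro x hx
      obtain ⟨hg, _, hh⟩ := key x hx
      exact (hg.sub hh).differentiableAt.differentiableWithinAt
    · rw [hint]
      intro x hx
      obtain ⟨hg, habs, hh⟩ := key x hx
      rw [HasDerivAt.deriv (f := fun x => g x - h x) (hg.sub hh)]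
      have := abs_le.1 habs
      linarith [this.2]
  intro ε hε
  have hfε : (0:ℝ) < f ε + 1 := by have := hpos ε hε; linarith
  have hkey : g ε ≤ g ε₁ + h ε₀ := by
    rcases le_total ε ε₁ with hle | hle
    · have := hmono hε hε₁ hle
      have h1 : 0 ≤ h ε := hhnonneg ε hε.1.le
      have h2 : h ε₁ ≤ h ε₀ := hhmono ε₁ hε₁
      simp only at this
      linarith
    · have := hanti hε₁ hε hle
      have h1 : 0 ≤ h ε₁ := hhnonneg ε₁ hε₁.1.le
      have h2 : h ε ≤ h ε₀ := hhmono ε hε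
      simp only at this
      linarith
  have hfε₁ : f ε₁ + 1 ≤ C * ε₁ ^ (-γ) + 1 := by linarith [hbound ε₁ hε₁]
  have hfε₁pos : (0:ℝ) < f ε₁ + 1 := by have := hpos ε₁ hε₁; linarith
  have : f ε + 1 ≤ (C * ε₁ ^ (-γ) + 1) * Real.exp (h ε₀) := by
    calc f ε + 1 = Real.exp (g ε) := (Real.exp_log hfε).symm
      _ ≤ Real.exp (g ε₁ + h ε₀) := Real.exp_le_exp.2 hkey
      _ = (f ε₁ + 1) * Real.exp (h ε₀) := by
          rw [Real.exp_add, Real.exp_log hfε₁pos]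
      _ ≤ (C * ε₁ ^ (-γ) + 1) * Real.exp (h ε₀) :=
          mul_le_mul_of_nonneg_right hfε₁ (Real.exp_pos _).le
  linarith
end

section
/- Let H be a complex Hilbert space, T : H → H a bounded invertible linear operator, θ ∈ ℝ and c > 0 such that Re( e^{iθ} ⟨T u, u⟩ ) ≥ c ‖u‖² for all u ∈ H. Then for every bounded operator B on H, ‖T^{-1} B‖ ≤ c^{-1/2} ‖B* T^{-1} B‖^{1/2}. -/
open ContinuousLinearMap

theorem quadratic_estimate_mourre {H : Type*} [NormedAddCommGroup H]
    [InnerProductSpace ℂ H] [CompleteSpace H]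
    (T : H ≃L[ℂ] H) (θ c : ℝ) (hc : 0 < c)
    (hcoer : ∀ u : H, c * ‖u‖ ^ 2 ≤
      (Complex.exp (θ * Complex.I) * (inner ℂ ((T : H →L[ℂ] H) u) u : ℂ)).re)
    (B : H →L[ℂ] H) :
    ‖((T.symm : H →L[ℂ] H).comp B)‖ ≤
      c ^ (-(1/2) : ℝ) *
        ‖(ContinuousLinearMap.adjoint B).comp ((T.symm : H →L[ℂ] H).comp B)‖ ^ ((1:ℝ)/2) := by
  set K := (ContinuousLinearMap.adjoint B).comp ((T.symm : H →L[ℂ] H).comp B) with hK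
  apply ContinuousLinearMap.opNorm_le_bound
  · positivity
  intro u
  set v : H := T.symm (B u) with hv
  have hTv : (T : H →L[ℂ] H) v = B u := T.apply_symm_apply (B u)
  have hKu : K u = ContinuousLinearMap.adjoint B v := by simp [hK, hv]
  have h1 : c * ‖v‖ ^ 2 ≤ ‖K‖ * ‖u‖ ^ 2 := by
    calc c * ‖v‖ ^ 2
        ≤ (Complex.exp (θ * Complex.I) * (inner ℂ ((T : H →L[ℂ] H) v) v : ℂ)).re :=
          hcoer v
      _ ≤ ‖Complex.exp (θ * Complex.I) * (inner ℂ ((T : H →L[ℂ] H) v) v : ℂ)‖ :=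
          Complex.re_le_norm _
      _ = ‖(inner ℂ ((T : H →L[ℂ] H) v) v : ℂ)‖ := by
          rw [norm_mul]
          simp [Complex.norm_exp]
      _ = ‖(inner ℂ u (K u) : ℂ)‖ := by
          rw [hTv, hKu, ContinuousLinearMap.adjoint_inner_right]
      _ ≤ ‖u‖ * ‖K u‖ := norm_inner_le_norm _ _
      _ ≤ ‖u‖ * (‖K‖ * ‖u‖) := by
          gcongr
          exact K.le_opNorm u
      _ = ‖K‖ * ‖u‖ ^ 2 := by ring
  have hcomp : ((T.symm : H →L[ℂ] H).comp B) u = v := rfl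
  rw [hcomp]
  have h2 : ‖v‖ ^ 2 ≤ (‖K‖ / c) * ‖u‖ ^ 2 := by
    rw [div_mul_eq_mul_div, le_div_iff₀ hc]
    nlinarith [h1]
  have h3 : ‖v‖ ≤ Real.sqrt ((‖K‖ / c) * ‖u‖ ^ 2) := by
    rw [← Real.sqrt_sq (norm_nonneg v)]
    exact Real.sqrt_le_sqrt h2
  calc ‖v‖ ≤ Real.sqrt ((‖K‖ / c) * ‖u‖ ^ 2) := h3
    _ = Real.sqrt (‖K‖ / c) * ‖u‖ := by
        rw [Real.sqrt_mul (by positivity), Real.sqrt_sq (norm_nonneg u)]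
    _ = c ^ (-(1/2) : ℝ) * ‖K‖ ^ ((1:ℝ)/2) * ‖u‖ := by
        rw [Real.sqrt_eq_rpow, Real.div_rpow (norm_nonneg K) hc.le,
          Real.rpow_neg hc.le]
        ring
end
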